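/- For every integer d < 0, there exists an element σ of the ring ℤ√d (the ring Zsqrtd d of elements a + b√d with a, b ∈ ℤ) such that the norm of σ (namely a² - d·b² for σ = a + b√d) is odd and σ generates ℤ√d as a ℤ-algebra, i.e. Algebra.adjoin ℤ {σ} = ⊤. -/

import Mathlib

lemma sqrtd_mem_top_aux (d : ℤ) (σ : ℤ√d) (h : Zsqrtd.sqrtd ∈ Algebra.adjoin ℤ ({σ} : Set (ℤ√d))) :
    Algebra.adjoin ℤ ({σ} : Set (ℤ√d)) = ⊤ := by
  rw [eq_top_iff]
  intro z _
  have : z = algebraMap ℤ (ℤ√d) z.re + z.im • Zsqrtd.sqrtd := by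
    ext <;> simp [zsmul_eq_mul, Zsqrtd.re_smul, Zsqrtd.im_smul]
  rw [this]
  exact add_mem (Subalgebra.algebraMap_mem _ _) (Subalgebra.smul_mem _ h _)

/-- Lemma 3.2 for the orders `ℤ[√d]`: there is a generator of odd norm. -/
theorem exists_generator_odd_norm (d : ℤ) (hd : d < 0) :
    ∃ σ : ℤ√d, Odd σ.norm ∧ Algebra.adjoin ℤ {σ} = ⊤ := by
  rcases Int.even_or_odd d with he | ho
  · refine ⟨1 + Zsqrtd.sqrtd, ?_, ?_⟩
    · have : (1 + Zsqrtd.sqrtd : ℤ√d).norm = 1 - d := by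
        simp [Zsqrtd.norm_def]
      rw [this]
      rcases he with ⟨k, hk⟩
      exact ⟨-k, by omega⟩
    · apply sqrtd_mem_top_aux
      have h1 : (1 + Zsqrtd.sqrtd : ℤ√d) ∈ Algebra.adjoin ℤ ({1 + Zsqrtd.sqrtd} : Set (ℤ√d)) :=
        Algebra.subset_adjoin rfl
      have := sub_mem h1 (Subalgebra.one_mem _)
      simpa using this
  · refine ⟨Zsqrtd.sqrtd, ?_, ?_⟩
    · have : (Zsqrtd.sqrtd : ℤ√d).norm = -d := by simp [Zsqrtd.norm_def]
      rw [this]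
      rcases ho with ⟨k, hk⟩
      exact ⟨-k - 1, by omega⟩
    · exact sqrtd_mem_top_aux d _ (Algebra.subset_adjoin rfl)
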